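/- Let H be a normal subgroup of a finite group G. Suppose M is a set of integers such that M completely splits G (G = MS: every element of G has a unique representation m·s) and M splits G/H (every nonzero element of G/H has a unique representation m·t with t in some T ⊆ G/H, and 0 has no such representation). Then H = M·(S ∩ H) is a complete splitting of H: every element of H has a unique representation m·s with m ∈ M, s ∈ S ∩ H. -/

import Mathlib

open Finset AddSubgroup

private lemma stmt16_zsmul_mem {Q : Type*} [AddGroup Q] (m : ℤ) {y z : Q}
    (h : z ∈ AddSubgroup.zmultiples y) : m • z ∈ AddSubgroup.zmultiples (m • y) := by
  obtain ⟨k, hk⟩ := AddSubgroup.mem_zmultiples_iff.mp h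
  refine AddSubgroup.mem_zmultiples_iff.mpr ⟨k, ?_⟩
  rw [← hk, ← mul_zsmul, ← mul_zsmul, mul_comm]

private lemma stmt16_le {Q : Type*} [AddGroup Q] (m : ℤ) (y : Q) :
    AddSubgroup.zmultiples (m • y) ≤ AddSubgroup.zmultiples y :=
  AddSubgroup.zmultiples_le.mpr (AddSubgroup.zsmul_mem _ (AddSubgroup.mem_zmultiples y) m)

private lemma stmt16_congr {Q : Type*} [AddGroup Q] {y y' : Q}
    (h : AddSubgroup.zmultiples y = AddSubgroup.zmultiples y') (m : ℤ) :
    AddSubgroup.zmultiples (m • y) = AddSubgroup.zmultiples (m • y') := by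
  apply le_antisymm
  · exact AddSubgroup.zmultiples_le.mpr
      (stmt16_zsmul_mem m (h ▸ AddSubgroup.mem_zmultiples y))
  · exact AddSubgroup.zmultiples_le.mpr
      (stmt16_zsmul_mem m (h.symm ▸ AddSubgroup.mem_zmultiples y'))

private lemma stmt16_diag {Q : Type*} [AddGroup Q] {t : Q} {m : ℤ}
    (ht : AddSubgroup.zmultiples (m • t) = AddSubgroup.zmultiples t)
    {y : Q} (hy : y ∈ AddSubgroup.zmultiples t) :
    AddSubgroup.zmultiples (m • y) = AddSubgroup.zmultiples y := by
  obtain ⟨k, rfl⟩ := AddSubgroup.mem_zmultiples_iff.mp hy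
  apply le_antisymm (stmt16_le m _)
  rw [AddSubgroup.zmultiples_le]
  have h1 : m • k • t = k • m • t := by rw [← mul_zsmul, ← mul_zsmul, mul_comm]
  rw [h1]
  exact stmt16_zsmul_mem k (ht.symm ▸ AddSubgroup.mem_zmultiples t)

theorem stmt_16 {G : Type*} [AddGroup G] [Fintype G]
    (H : AddSubgroup G) [H.Normal]
    (M : Finset ℤ) (S : Finset G)
    (hCS : ∀ x : G, ∃! p : ℤ × G, p.1 ∈ M ∧ p.2 ∈ S ∧ p.1 • p.2 = x)
    (hsplit : ∃ T : Finset (G ⧸ H),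
      (∀ x : G ⧸ H, x ≠ 0 →
        ∃! p : ℤ × (G ⧸ H), p.1 ∈ M ∧ p.2 ∈ T ∧ p.1 • p.2 = x) ∧
      ¬ ∃ m ∈ M, ∃ t ∈ T, m • t = (0 : G ⧸ H)) :
    ∀ x : G, x ∈ H →
      ∃! p : ℤ × G, p.1 ∈ M ∧ p.2 ∈ S ∧ p.2 ∈ H ∧ p.1 • p.2 = x := by
  classical
  obtain ⟨T, hT, hT0⟩ := hsplit
  haveI : Fintype (G ⧸ H) := Fintype.ofFinite _
  set cardH : ℕ := (Finset.univ.filter fun x : G => x ∈ H).card with hcardH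
  have cardH_pos : 0 < cardH := Finset.card_pos.mpr ⟨0, by simp [H.zero_mem]⟩
  -- fibers of the quotient map
  have fiber : ∀ c : G ⧸ H,
      (Finset.univ.filter fun x : G => (x : G ⧸ H) = c).card = cardH := by
    intro c
    obtain ⟨g, rfl⟩ := QuotientAddGroup.mk_surjective c
    rw [hcardH]
    apply Finset.card_nbij' (i := fun x => -g + x) (j := fun k => g + k)
    · intro x hx
      simp only [Finset.mem_coe, Finset.mem_filter, Finset.mem_univ, true_and] at hx ⊢
      exact (QuotientAddGroup.eq (s := H)).mp hx.symm
    · intro k hk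
      simp only [Finset.mem_coe, Finset.mem_filter, Finset.mem_univ, true_and] at hk ⊢
      exact ((QuotientAddGroup.eq (s := H)).mpr (by simpa using hk)).symm
    · intro x _; simp
    · intro k _; simp
  -- S-side count over any predicate on the quotient
  have hGS : ∀ P : (G ⧸ H) → Prop,
      ((M ×ˢ S).filter fun p : ℤ × G => P ((p.1 • p.2 : G) : G ⧸ H)).card
        = (Finset.univ.filter fun x : G => P (x : G ⧸ H)).card := by
    intro P
    apply Finset.card_bij (i := fun p _ => p.1 • p.2)
    · intro p hp
      simp only [Finset.mem_filter, Finset.mem_univ, true_and] at hp ⊢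
      exact hp.2
    · intro p₁ h₁ p₂ h₂ he
      simp only [Finset.mem_filter, Finset.mem_product] at h₁ h₂
      obtain ⟨q, _, hq⟩ := hCS (p₁.1 • p₁.2)
      exact (hq p₁ ⟨h₁.1.1, h₁.1.2, rfl⟩).trans (hq p₂ ⟨h₂.1.1, h₂.1.2, he.symm⟩).symm
    · intro x hx
      simp only [Finset.mem_filter, Finset.mem_univ, true_and] at hx
      obtain ⟨p, ⟨hm, hs, he⟩, _⟩ := hCS x
      refine ⟨p, ?_, he⟩
      simp only [Finset.mem_filter, Finset.mem_product]
      exact ⟨⟨hm, hs⟩, by rw [he]; exact hx⟩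
  -- T-side count over any predicate on the quotient not holding at 0
  have hQT : ∀ P : (G ⧸ H) → Prop, ¬ P 0 →
      ((M ×ˢ T).filter fun p : ℤ × (G ⧸ H) => P (p.1 • p.2)).card
        = (Finset.univ.filter fun c : G ⧸ H => P c).card := by
    intro P hP0
    apply Finset.card_bij (i := fun p _ => p.1 • p.2)
    · intro p hp
      simp only [Finset.mem_filter, Finset.mem_univ, true_and] at hp ⊢
      exact hp.2
    · intro p₁ h₁ p₂ h₂ he
      simp only [Finset.mem_filter, Finset.mem_product] at h₁ h₂
      have hne : p₁.1 • p₁.2 ≠ 0 := fun h0 => hT0 ⟨p₁.1, h₁.1.1, p₁.2, h₁.1.2, h0⟩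
      obtain ⟨q, _, hq⟩ := hT (p₁.1 • p₁.2) hne
      exact (hq p₁ ⟨h₁.1.1, h₁.1.2, rfl⟩).trans (hq p₂ ⟨h₂.1.1, h₂.1.2, he.symm⟩).symm
    · intro c hc
      simp only [Finset.mem_filter, Finset.mem_univ, true_and] at hc
      have hc0 : c ≠ 0 := fun h => hP0 (h ▸ hc)
      obtain ⟨p, ⟨hm, ht, he⟩, _⟩ := hT c hc0
      refine ⟨p, ?_, he⟩
      simp only [Finset.mem_filter, Finset.mem_product]
      exact ⟨⟨hm, ht⟩, by rw [he]; exact hc⟩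
  -- pair counts as sums over the second coordinate : S version
  have pairsumS : ∀ C : AddSubgroup (G ⧸ H),
      ((M ×ˢ S).filter fun p : ℤ × G =>
          zmultiples (p.1 • ((p.2 : G) : G ⧸ H)) = C).card
        = ∑ s ∈ S, (M.filter fun m => zmultiples (m • ((s : G) : G ⧸ H)) = C).card := by
    intro C
    rw [Finset.card_eq_sum_card_fiberwise (f := Prod.snd) (t := S)
      (fun p hp => (Finset.mem_product.mp (Finset.mem_filter.mp hp).1).2)]
    refine Finset.sum_congr rfl fun b hb => ?_
    apply Finset.card_nbij' (i := Prod.fst) (j := fun m => (m, b))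
    · intro p hp
      simp only [Finset.mem_coe, Finset.mem_filter, Finset.mem_product] at hp ⊢
      obtain ⟨⟨⟨h1, _⟩, h3⟩, h4⟩ := hp
      exact ⟨h1, by rw [← h4]; exact h3⟩
    · intro m hm
      simp only [Finset.mem_coe, Finset.mem_filter, Finset.mem_product] at hm ⊢
      exact ⟨⟨⟨hm.1, hb⟩, hm.2⟩, trivial⟩
    · intro p hp
      simp only [Finset.mem_coe, Finset.mem_filter] at hp
      exact Prod.ext rfl hp.2.symm
    · intro m _; rfl
  -- pair counts as sums over the second coordinate : T version
  have pairsumT : ∀ C : AddSubgroup (G ⧸ H),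
      ((M ×ˢ T).filter fun p : ℤ × (G ⧸ H) => zmultiples (p.1 • p.2) = C).card
        = ∑ t ∈ T, (M.filter fun m => zmultiples (m • t) = C).card := by
    intro C
    rw [Finset.card_eq_sum_card_fiberwise (f := Prod.snd) (t := T)
      (fun p hp => (Finset.mem_product.mp (Finset.mem_filter.mp hp).1).2)]
    refine Finset.sum_congr rfl fun b hb => ?_
    apply Finset.card_nbij' (i := Prod.fst) (j := fun m => (m, b))
    · intro p hp
      simp only [Finset.mem_coe, Finset.mem_filter, Finset.mem_product] at hp ⊢
      obtain ⟨⟨⟨h1, _⟩, h3⟩, h4⟩ := hp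
      exact ⟨h1, by rw [← h4]; exact h3⟩
    · intro m hm
      simp only [Finset.mem_coe, Finset.mem_filter, Finset.mem_product] at hm ⊢
      exact ⟨⟨⟨hm.1, hb⟩, hm.2⟩, trivial⟩
    · intro p hp
      simp only [Finset.mem_coe, Finset.mem_filter] at hp
      exact Prod.ext rfl hp.2.symm
    · intro m _; rfl
  -- master S-side equation
  have eqS : ∀ C : AddSubgroup (G ⧸ H),
      ∑ s ∈ S, (M.filter fun m => zmultiples (m • ((s : G) : G ⧸ H)) = C).card
        = (Finset.univ.filter fun d : G ⧸ H => zmultiples d = C).card * cardH := by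
    intro C
    rw [← pairsumS C]
    have hco : ((M ×ˢ S).filter fun p : ℤ × G =>
          zmultiples (p.1 • ((p.2 : G) : G ⧸ H)) = C)
        = (M ×ˢ S).filter fun p : ℤ × G =>
          zmultiples (((p.1 • p.2 : G) : G ⧸ H)) = C := by
      apply Finset.filter_congr; intro p _
      rw [QuotientAddGroup.mk_zsmul]
    rw [hco, hGS (fun d => zmultiples d = C)]
    rw [Finset.card_eq_sum_card_fiberwise (f := fun x : G => (x : G ⧸ H))
      (t := Finset.univ.filter fun d : G ⧸ H => zmultiples d = C)
      (fun x hx => by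
        simp only [Finset.mem_coe, Finset.mem_filter, Finset.mem_univ, true_and] at hx ⊢
        exact hx)]
    have hterm : ∀ d ∈ (Finset.univ.filter fun d : G ⧸ H => zmultiples d = C),
        ((Finset.univ.filter fun x : G => zmultiples ((x : G ⧸ H)) = C).filter
          fun x : G => (x : G ⧸ H) = d).card = cardH := by
      intro d hd
      rw [Finset.filter_filter]
      have heq : (Finset.univ.filter fun x : G =>
            zmultiples ((x : G ⧸ H)) = C ∧ (x : G ⧸ H) = d)
          = Finset.univ.filter fun x : G => (x : G ⧸ H) = d := by
        apply Finset.filter_congr; intro x _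
        exact ⟨fun h => h.2, fun h =>
          ⟨by rw [h]; exact (Finset.mem_filter.mp hd).2, h⟩⟩
      rw [heq, fiber d]
    rw [Finset.sum_congr rfl hterm, Finset.sum_const, smul_eq_mul]
  -- master T-side equation
  have eqT : ∀ C : AddSubgroup (G ⧸ H), C ≠ ⊥ →
      ∑ t ∈ T, (M.filter fun m => zmultiples (m • t) = C).card
        = (Finset.univ.filter fun d : G ⧸ H => zmultiples d = C).card := by
    intro C hC
    rw [← pairsumT C]
    apply hQT (fun d => zmultiples d = C)
    intro h
    apply hC
    rw [← h]
    simpa using AddSubgroup.zmultiples_eq_bot.mpr rfl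
  -- diagonal positivity
  have diag : ∀ y : G ⧸ H, y ≠ 0 → ∃ m ∈ M, zmultiples (m • y) = zmultiples y := by
    intro y hy
    obtain ⟨cs, hcmem, hcmax⟩ := Finset.exists_max_image
      (Finset.univ.filter fun d : G ⧸ H => zmultiples y ≤ zmultiples d)
      (fun d => Nat.card (zmultiples d))
      ⟨y, by simp⟩
    have hyc : zmultiples y ≤ zmultiples cs := (Finset.mem_filter.mp hcmem).2
    have hmax : ∀ d : G ⧸ H, zmultiples cs ≤ zmultiples d →
        zmultiples d = zmultiples cs := by
      intro d hd
      have h1 : d ∈ Finset.univ.filter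
          (fun d : G ⧸ H => zmultiples y ≤ zmultiples d) := by
        simp only [Finset.mem_filter, Finset.mem_univ, true_and]
        exact le_trans hyc hd
      exact (AddSubgroup.eq_of_le_of_card_ge hd (hcmax d h1)).symm
    have hcs0 : cs ≠ 0 := by
      intro h0
      have hym : y ∈ zmultiples cs := hyc (AddSubgroup.mem_zmultiples y)
      rw [h0] at hym
      obtain ⟨k, hk⟩ := AddSubgroup.mem_zmultiples_iff.mp hym
      rw [smul_zero] at hk
      exact hy hk.symm
    have hbot : zmultiples cs ≠ ⊥ := fun h =>
      hcs0 (AddSubgroup.zmultiples_eq_bot.mp h)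
    have hγ : 0 < (Finset.univ.filter
        fun d : G ⧸ H => zmultiples d = zmultiples cs).card :=
      Finset.card_pos.mpr ⟨cs, by simp⟩
    have h2 := eqT (zmultiples cs) hbot
    have hex : ∃ t ∈ T, ∃ m ∈ M, zmultiples (m • t) = zmultiples cs := by
      by_contra hcon
      push_neg at hcon
      have hzero : ∑ t ∈ T,
          (M.filter fun m => zmultiples (m • t) = zmultiples cs).card = 0 := by
        apply Finset.sum_eq_zero
        intro t ht
        rw [Finset.card_eq_zero, Finset.filter_eq_empty_iff]
        intro m hm
        exact hcon t ht m hm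
      rw [hzero] at h2
      omega
    obtain ⟨ts, htT, ms, hmM, hZ⟩ := hex
    have htZ : zmultiples ts = zmultiples cs := hmax ts (hZ ▸ stmt16_le ms ts)
    have hdiag : zmultiples (ms • ts) = zmultiples ts := hZ.trans htZ.symm
    have hyin : y ∈ zmultiples ts := by
      have hym : y ∈ zmultiples cs := hyc (AddSubgroup.mem_zmultiples y)
      rw [← htZ] at hym
      exact hym
    exact ⟨ms, hmM, stmt16_diag hdiag hyin⟩
  -- the key induction
  have key : ∀ n : ℕ, ∀ c : G ⧸ H, c ≠ 0 →
      Fintype.card (G ⧸ H) - Nat.card (zmultiples c) < n →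
      (∑ d ∈ Finset.univ.filter fun d : G ⧸ H => zmultiples d = zmultiples c,
          (S.filter fun s : G => ((s : G) : G ⧸ H) = d).card)
        = cardH * ∑ d ∈ Finset.univ.filter
            fun d : G ⧸ H => zmultiples d = zmultiples c,
          (T.filter fun t => t = d).card := by
    intro n
    induction n with
    | zero => intro c _ h; exact absurd h (Nat.not_lt_zero _)
    | succ n ih =>
      intro c hc hmeas
      have hCbot : zmultiples c ≠ ⊥ := fun h =>
        hc (AddSubgroup.zmultiples_eq_bot.mp h)
      set a : (G ⧸ H) → ℕ :=
        fun d => (M.filter fun m => zmultiples (m • d) = zmultiples c).card with ha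
      set nS : (G ⧸ H) → ℕ :=
        fun d => (S.filter fun s : G => ((s : G) : G ⧸ H) = d).card with hnS
      set nT : (G ⧸ H) → ℕ := fun d => (T.filter fun t => t = d).card with hnT
      -- rewrite the master equations as sums over the quotient group
      have masterS : ∑ d ∈ (Finset.univ : Finset (G ⧸ H)), nS d * a d
          = (Finset.univ.filter
              fun d : G ⧸ H => zmultiples d = zmultiples c).card * cardH := by
        rw [← eqS (zmultiples c)]
        rw [← Finset.sum_fiberwise_of_maps_to
          (g := fun s : G => ((s : G) : G ⧸ H)) (t := Finset.univ)
          (fun s _ => Finset.mem_univ _)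
          (fun s => (M.filter fun m =>
            zmultiples (m • ((s : G) : G ⧸ H)) = zmultiples c).card)]
        apply Finset.sum_congr rfl
        intro d _
        have hterm : ∀ s ∈ S.filter (fun s : G => ((s : G) : G ⧸ H) = d),
            (M.filter fun m =>
              zmultiples (m • ((s : G) : G ⧸ H)) = zmultiples c).card = a d := by
          intro s hs
          rw [(Finset.mem_filter.mp hs).2, ha]
        rw [Finset.sum_congr rfl hterm, Finset.sum_const, smul_eq_mul, hnS]
      have masterT : ∑ d ∈ (Finset.univ : Finset (G ⧸ H)), nT d * a d
          = (Finset.univ.filter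
              fun d : G ⧸ H => zmultiples d = zmultiples c).card := by
        rw [← eqT (zmultiples c) hCbot]
        rw [← Finset.sum_fiberwise_of_maps_to
          (g := fun t : G ⧸ H => t) (t := Finset.univ)
          (fun t _ => Finset.mem_univ _)
          (fun t => (M.filter fun m => zmultiples (m • t) = zmultiples c).card)]
        apply Finset.sum_congr rfl
        intro d _
        have hterm : ∀ t ∈ T.filter (fun t => t = d),
            (M.filter fun m => zmultiples (m • t) = zmultiples c).card = a d := by
          intro t ht
          rw [(Finset.mem_filter.mp ht).2, ha]
        rw [Finset.sum_congr rfl hterm, Finset.sum_const, smul_eq_mul, hnT]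
      -- split the sums
      have splitQ : ∀ f : (G ⧸ H) → ℕ,
          ∑ d ∈ (Finset.univ : Finset (G ⧸ H)), f d * a d
            = (∑ d ∈ Finset.univ.filter
                fun d : G ⧸ H => zmultiples d = zmultiples c, f d) * a c
              + ∑ d ∈ Finset.univ.filter
                  (fun d : G ⧸ H => zmultiples c < zmultiples d), f d * a d := by
        intro f
        rw [← Finset.sum_filter_add_sum_filter_not Finset.univ
          (fun d : G ⧸ H => zmultiples d = zmultiples c) (fun d => f d * a d)]
        congr 1
        · rw [Finset.sum_mul]
          apply Finset.sum_congr rfl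
          intro d hd
          have hzd : zmultiples d = zmultiples c := (Finset.mem_filter.mp hd).2
          have haa : a d = a c := by
            rw [ha]
            apply congrArg
            apply Finset.filter_congr
            intro m _
            rw [stmt16_congr hzd m]
          rw [haa]
        · rw [← Finset.sum_filter_add_sum_filter_not
            (Finset.univ.filter fun d : G ⧸ H => ¬zmultiples d = zmultiples c)
            (fun d => zmultiples c < zmultiples d) (fun d => f d * a d)]
          have h1 : (Finset.univ.filter
                fun d : G ⧸ H => ¬zmultiples d = zmultiples c).filter
                (fun d => zmultiples c < zmultiples d)
              = Finset.univ.filter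
                (fun d : G ⧸ H => zmultiples c < zmultiples d) := by
            rw [Finset.filter_filter]
            apply Finset.filter_congr
            intro d _
            exact ⟨fun h => h.2, fun h => ⟨(ne_of_gt h), h⟩⟩
          have h2 : ∑ d ∈ (Finset.univ.filter
                fun d : G ⧸ H => ¬zmultiples d = zmultiples c).filter
                (fun d => ¬zmultiples c < zmultiples d), f d * a d = 0 := by
            apply Finset.sum_eq_zero
            intro d hd
            simp only [Finset.mem_filter, Finset.mem_univ, true_and] at hd
            have had : a d = 0 := by
              rw [ha, Finset.card_eq_zero, Finset.filter_eq_empty_iff]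
              intro m _
              intro hzz
              apply hd.2
              apply lt_of_le_of_ne (hzz ▸ stmt16_le m d)
              exact fun heq => hd.1 heq.symm
            rw [had, Nat.mul_zero]
          rw [h1, h2, add_zero]
      -- the remainder sums are proportional
      have hrem : ∑ d ∈ Finset.univ.filter
            (fun d : G ⧸ H => zmultiples c < zmultiples d), nS d * a d
          = cardH * ∑ d ∈ Finset.univ.filter
              (fun d : G ⧸ H => zmultiples c < zmultiples d), nT d * a d := by
        have hmapsto : ∀ d ∈ Finset.univ.filter
            (fun d : G ⧸ H => zmultiples c < zmultiples d),
            zmultiples d ∈ ((Finset.univ.image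
              fun d : G ⧸ H => zmultiples d).filter
                fun D => zmultiples c < D) := by
          intro d hd
          simp only [Finset.mem_filter, Finset.mem_univ, true_and,
            Finset.mem_image] at hd ⊢
          exact ⟨⟨d, rfl⟩, hd⟩
        rw [← Finset.sum_fiberwise_of_maps_to hmapsto (fun d => nS d * a d),
          ← Finset.sum_fiberwise_of_maps_to hmapsto (fun d => nT d * a d),
          Finset.mul_sum]
        apply Finset.sum_congr rfl
        intro D hD
        obtain ⟨hDim, hCD⟩ := Finset.mem_filter.mp hD
        obtain ⟨d₀, _, hd₀⟩ := Finset.mem_image.mp hDim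
        have hE : (Finset.univ.filter
              (fun d : G ⧸ H => zmultiples c < zmultiples d)).filter
              (fun d => zmultiples d = D)
            = Finset.univ.filter (fun d : G ⧸ H => zmultiples d = D) := by
          rw [Finset.filter_filter]
          apply Finset.filter_congr
          intro d _
          exact ⟨fun h => h.2, fun h => ⟨h ▸ hCD, h⟩⟩
        rw [hE]
        have haa : ∀ d ∈ Finset.univ.filter
            (fun d : G ⧸ H => zmultiples d = D), a d = a d₀ := by
          intro d hd
          have hzd : zmultiples d = zmultiples d₀ := by
            rw [(Finset.mem_filter.mp hd).2, hd₀]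
          rw [ha]
          apply congrArg
          apply Finset.filter_congr
          intro m _
          rw [stmt16_congr hzd m]
        -- apply the induction hypothesis at d₀
        have hd₀ne : d₀ ≠ 0 := by
          intro h0
          apply hCbot
          apply eq_bot_iff.mpr
          calc zmultiples c ≤ zmultiples d₀ := le_of_lt (hd₀ ▸ hCD)
            _ = ⊥ := by rw [h0]; exact AddSubgroup.zmultiples_eq_bot.mpr rfl
        have hcardlt : Nat.card (zmultiples c) < Nat.card (zmultiples (d₀ : G ⧸ H)) := by
          have hle : zmultiples c ≤ zmultiples d₀ := le_of_lt (hd₀ ▸ hCD)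
          have h1 : Nat.card (zmultiples c) ≤ Nat.card (zmultiples (d₀ : G ⧸ H)) :=
            AddSubgroup.card_le_of_le hle
          rcases lt_or_eq_of_le h1 with h | h
          · exact h
          · exact absurd (AddSubgroup.eq_of_le_of_card_ge hle (le_of_eq h.symm))
              (ne_of_lt (hd₀ ▸ hCD))
        have hcardle : Nat.card (zmultiples (d₀ : G ⧸ H)) ≤ Fintype.card (G ⧸ H) := by
          rw [← Nat.card_eq_fintype_card]
          exact Nat.card_le_card_of_injective _ Subtype.coe_injective
        have hihd := ih d₀ hd₀ne (by omega)
        rw [hd₀] at hihd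
        calc ∑ d ∈ Finset.univ.filter (fun d : G ⧸ H => zmultiples d = D),
              nS d * a d
            = ∑ d ∈ Finset.univ.filter (fun d : G ⧸ H => zmultiples d = D),
              nS d * a d₀ :=
              Finset.sum_congr rfl fun d hd => by rw [haa d hd]
          _ = (∑ d ∈ Finset.univ.filter (fun d : G ⧸ H => zmultiples d = D),
              nS d) * a d₀ := (Finset.sum_mul _ _ _).symm
          _ = (cardH * ∑ d ∈ Finset.univ.filter
              (fun d : G ⧸ H => zmultiples d = D), nT d) * a d₀ := by rw [hihd]
          _ = cardH * ((∑ d ∈ Finset.univ.filter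
              (fun d : G ⧸ H => zmultiples d = D), nT d) * a d₀) := by
              rw [mul_assoc]
          _ = cardH * ∑ d ∈ Finset.univ.filter
              (fun d : G ⧸ H => zmultiples d = D), nT d * a d₀ := by
              rw [Finset.sum_mul]
          _ = cardH * ∑ d ∈ Finset.univ.filter
              (fun d : G ⧸ H => zmultiples d = D), nT d * a d :=
              congrArg _ (Finset.sum_congr rfl fun d hd => by rw [haa d hd])
      -- combine
      have hSsplit := splitQ nS
      have hTsplit := splitQ nT
      rw [masterS] at hSsplit
      rw [masterT] at hTsplit
      have hac : 0 < a c := by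
        obtain ⟨m, hmM, hm⟩ := diag c hc
        rw [ha]
        apply Finset.card_pos.mpr
        exact ⟨m, Finset.mem_filter.mpr ⟨hmM, hm⟩⟩
      have e1 : (∑ d ∈ Finset.univ.filter
            fun d : G ⧸ H => zmultiples d = zmultiples c, nS d) * a c
          + cardH * ∑ d ∈ Finset.univ.filter
              (fun d : G ⧸ H => zmultiples c < zmultiples d), nT d * a d
          = (Finset.univ.filter
              fun d : G ⧸ H => zmultiples d = zmultiples c).card * cardH := by
        rw [hSsplit, hrem]
      have e2 : (cardH * ∑ d ∈ Finset.univ.filter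
            fun d : G ⧸ H => zmultiples d = zmultiples c, nT d) * a c
          + cardH * ∑ d ∈ Finset.univ.filter
              (fun d : G ⧸ H => zmultiples c < zmultiples d), nT d * a d
          = (Finset.univ.filter
              fun d : G ⧸ H => zmultiples d = zmultiples c).card * cardH := by
        calc (cardH * ∑ d ∈ Finset.univ.filter
              fun d : G ⧸ H => zmultiples d = zmultiples c, nT d) * a c
            + cardH * ∑ d ∈ Finset.univ.filter
                (fun d : G ⧸ H => zmultiples c < zmultiples d), nT d * a d
            = cardH * ((∑ d ∈ Finset.univ.filter
                fun d : G ⧸ H => zmultiples d = zmultiples c, nT d) * a c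
              + ∑ d ∈ Finset.univ.filter
                  (fun d : G ⧸ H => zmultiples c < zmultiples d), nT d * a d) := by
              rw [Nat.mul_add, mul_assoc]
          _ = cardH * (Finset.univ.filter
              fun d : G ⧸ H => zmultiples d = zmultiples c).card := by
              rw [← hTsplit]
          _ = _ := Nat.mul_comm _ _
      have hfin := Nat.add_right_cancel (e1.trans e2.symm)
      exact Nat.eq_of_mul_eq_mul_right hac hfin
  -- conclusion
  intro x hx
  obtain ⟨p, ⟨hm, hs, he⟩, huniq⟩ := hCS x
  have hpH : p.2 ∈ H := by
    by_contra hpnH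
    have hc : ((p.2 : G) : G ⧸ H) ≠ 0 := by
      rw [ne_eq, QuotientAddGroup.eq_zero_iff]
      exact hpnH
    have hx0 : ((x : G) : G ⧸ H) = 0 := (QuotientAddGroup.eq_zero_iff x).mpr hx
    have hsm : p.1 • ((p.2 : G) : G ⧸ H) = 0 := by
      rw [← QuotientAddGroup.mk_zsmul, he, hx0]
    have hk := key (Fintype.card (G ⧸ H) + 1) ((p.2 : G) : G ⧸ H) hc
      (by have := Nat.sub_le (Fintype.card (G ⧸ H))
            (Nat.card (zmultiples ((p.2 : G) : G ⧸ H))); omega)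
    have hu : 0 < ∑ d ∈ Finset.univ.filter
        (fun d : G ⧸ H => zmultiples d = zmultiples ((p.2 : G) : G ⧸ H)),
        (S.filter fun s : G => ((s : G) : G ⧸ H) = d).card := by
      have hmem : ((p.2 : G) : G ⧸ H) ∈ Finset.univ.filter
          (fun d : G ⧸ H => zmultiples d = zmultiples ((p.2 : G) : G ⧸ H)) := by
        simp
      have hterm : 0 < (S.filter
          fun s : G => ((s : G) : G ⧸ H) = ((p.2 : G) : G ⧸ H)).card :=
        Finset.card_pos.mpr ⟨p.2, Finset.mem_filter.mpr ⟨hs, rfl⟩⟩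
      calc 0 < (S.filter
            fun s : G => ((s : G) : G ⧸ H) = ((p.2 : G) : G ⧸ H)).card := hterm
        _ ≤ _ := Finset.single_le_sum
          (f := fun d : G ⧸ H => (S.filter fun s : G => ((s : G) : G ⧸ H) = d).card)
          (fun i _ => Nat.zero_le _) hmem
    rw [hk] at hu
    have hv : 0 < ∑ d ∈ Finset.univ.filter
        (fun d : G ⧸ H => zmultiples d = zmultiples ((p.2 : G) : G ⧸ H)),
        (T.filter fun t => t = d).card := by
      rcases Nat.eq_zero_or_pos (∑ d ∈ Finset.univ.filter
          (fun d : G ⧸ H => zmultiples d = zmultiples ((p.2 : G) : G ⧸ H)),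
          (T.filter fun t => t = d).card) with h0 | h0
      · rw [h0, Nat.mul_zero] at hu; exact absurd hu (lt_irrefl 0)
      · exact h0
    obtain ⟨d, hd, hdne⟩ := Finset.exists_ne_zero_of_sum_ne_zero hv.ne'
    obtain ⟨t, ht⟩ := Finset.card_pos.mp (Nat.pos_of_ne_zero hdne)
    obtain ⟨htT, htd⟩ := Finset.mem_filter.mp ht
    have hZd : zmultiples d = zmultiples ((p.2 : G) : G ⧸ H) :=
      (Finset.mem_filter.mp hd).2
    have htmem : t ∈ zmultiples ((p.2 : G) : G ⧸ H) := by
      rw [← hZd, htd]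
      exact AddSubgroup.mem_zmultiples d
    obtain ⟨k, hk2⟩ := AddSubgroup.mem_zmultiples_iff.mp htmem
    apply hT0
    refine ⟨p.1, hm, t, htT, ?_⟩
    rw [← hk2, ← mul_zsmul, mul_comm, mul_zsmul, hsm, smul_zero]
  exact ⟨p, ⟨hm, hs, hpH, he⟩, fun q hq => huniq q ⟨hq.1, hq.2.1, hq.2.2.2⟩⟩
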